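/- Let a₀ > 0 and b₀ > 0. Then as n → ∞, sin(b₀·log(n+1))/(n+1)^{a₀} = sin(b₀·log n)/n^{a₀} + (b₀·cos(b₀·log n) - a₀·sin(b₀·log n))/n^{a₀+1} + O(1/n^{a₀+2}). -/

import Mathlib

open Real

private lemma deriv1 (b a x : ℝ) (hx : 0 < x) :
    HasDerivAt (fun x => Real.sin (b * Real.log x) * x ^ (-a))
      ((b * Real.cos (b * Real.log x) - a * Real.sin (b * Real.log x)) * x ^ (-a - 1)) x := by
  have hlog : HasDerivAt (fun x => b * Real.log x) (b * x⁻¹) x :=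
    (Real.hasDerivAt_log hx.ne').const_mul b
  have hsin : HasDerivAt (fun x => Real.sin (b * Real.log x))
      (Real.cos (b * Real.log x) * (b * x⁻¹)) x := (Real.hasDerivAt_sin _).comp x hlog
  have hpow : HasDerivAt (fun x : ℝ => x ^ (-a)) (-a * x ^ (-a - 1)) x :=
    Real.hasDerivAt_rpow_const (Or.inl hx.ne')
  have h := hsin.mul hpow
  refine h.congr_deriv ?_
  have e1 : x ^ (-a - 1) = x ^ (-a) * x⁻¹ := by
    rw [← Real.rpow_neg_one x, ← Real.rpow_add hx]; ring_nf
  rw [e1]; ring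

private lemma deriv2 (b a x : ℝ) (hx : 0 < x) :
    HasDerivAt (fun x => (b * Real.cos (b * Real.log x) - a * Real.sin (b * Real.log x)) * x ^ (-a - 1))
      ((-(b^2 * Real.sin (b * Real.log x) + a * b * Real.cos (b * Real.log x))
        + (a+1) * (a * Real.sin (b * Real.log x) - b * Real.cos (b * Real.log x))) * x ^ (-a - 2)) x := by
  have hlog : HasDerivAt (fun x => b * Real.log x) (b * x⁻¹) x :=
    (Real.hasDerivAt_log hx.ne').const_mul b
  have hsin : HasDerivAt (fun x => Real.sin (b * Real.log x))
      (Real.cos (b * Real.log x) * (b * x⁻¹)) x := (Real.hasDerivAt_sin _).comp x hlog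
  have hcos : HasDerivAt (fun x => Real.cos (b * Real.log x))
      (-Real.sin (b * Real.log x) * (b * x⁻¹)) x := (Real.hasDerivAt_cos _).comp x hlog
  have hfac : HasDerivAt (fun x => b * Real.cos (b * Real.log x) - a * Real.sin (b * Real.log x))
      (b * (-Real.sin (b * Real.log x) * (b * x⁻¹)) - a * (Real.cos (b * Real.log x) * (b * x⁻¹))) x :=
    (hcos.const_mul b).sub (hsin.const_mul a)
  have hpow : HasDerivAt (fun x : ℝ => x ^ (-a - 1)) ((-a - 1) * x ^ (-a - 1 - 1)) x :=
    Real.hasDerivAt_rpow_const (Or.inl hx.ne')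
  have h := hfac.mul hpow
  refine h.congr_deriv ?_
  have e1 : x ^ (-a - 2) = x ^ (-a - 1) * x⁻¹ := by
    rw [← Real.rpow_neg_one x, ← Real.rpow_add hx]; ring_nf
  have e2 : x ^ (-a - 1 - 1) = x ^ (-a - 2) := by ring_nf
  rw [e2, e1]; ring

theorem asymptotic_expansion_sin (a₀ b₀ : ℝ) (ha : 0 < a₀) (hb : 0 < b₀) :
    ∃ C : ℝ, ∃ N₀ : ℕ, ∀ n : ℕ, N₀ ≤ n →
      |Real.sin (b₀ * Real.log ((n : ℝ) + 1)) / ((n : ℝ) + 1) ^ a₀ -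
          (Real.sin (b₀ * Real.log n) / (n : ℝ) ^ a₀ +
            (b₀ * Real.cos (b₀ * Real.log n) - a₀ * Real.sin (b₀ * Real.log n)) /
              (n : ℝ) ^ (a₀ + 1))| ≤
        C / (n : ℝ) ^ (a₀ + 2) := by
  set M : ℝ := b₀^2 + a₀*b₀ + (a₀+1)*(a₀+b₀) with hM
  refine ⟨M, 1, fun n hn => ?_⟩
  set f : ℝ → ℝ := fun x => Real.sin (b₀ * Real.log x) * x ^ (-a₀) with hf
  set g : ℝ → ℝ := fun x =>
    (b₀ * Real.cos (b₀ * Real.log x) - a₀ * Real.sin (b₀ * Real.log x)) * x ^ (-a₀ - 1) with hg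
  set g' : ℝ → ℝ := fun x =>
    (-(b₀^2 * Real.sin (b₀ * Real.log x) + a₀ * b₀ * Real.cos (b₀ * Real.log x))
      + (a₀+1) * (a₀ * Real.sin (b₀ * Real.log x) - b₀ * Real.cos (b₀ * Real.log x))) * x ^ (-a₀ - 2)
    with hg'
  have hN1 : (1:ℝ) ≤ (n:ℝ) := by exact_mod_cast hn
  have hN0 : (0:ℝ) < (n:ℝ) := zero_lt_one.trans_le hN1
  set N : ℝ := (n:ℝ)
  set K : ℝ := M * N ^ (-a₀ - 2) with hK
  have hs : Convex ℝ (Set.Icc N (N+1)) := convex_Icc _ _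
  have hpos : ∀ x ∈ Set.Icc N (N+1), 0 < x := fun x hx => lt_of_lt_of_le hN0 hx.1
  -- bound on g'
  have hbound : ∀ x ∈ Set.Icc N (N+1), ‖g' x‖ ≤ K := by
    intro x hx
    have hxpos := hpos x hx
    rw [hg', Real.norm_eq_abs, abs_mul]
    have hco : |(-(b₀^2 * Real.sin (b₀ * Real.log x) + a₀ * b₀ * Real.cos (b₀ * Real.log x))
        + (a₀+1) * (a₀ * Real.sin (b₀ * Real.log x) - b₀ * Real.cos (b₀ * Real.log x)))| ≤ M := by
      set s := Real.sin (b₀ * Real.log x) with hsdef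
      set c := Real.cos (b₀ * Real.log x) with hcdef
      have hs1 : |s| ≤ 1 := Real.abs_sin_le_one _
      have hc1 : |c| ≤ 1 := Real.abs_cos_le_one _
      have e1 : |b₀^2 * s + a₀*b₀ * c| ≤ b₀^2 + a₀*b₀ := by
        calc |b₀^2 * s + a₀*b₀ * c| ≤ |b₀^2 * s| + |a₀*b₀ * c| := abs_add_le _ _
          _ = b₀^2 * |s| + (a₀*b₀) * |c| := by
              rw [abs_mul, abs_mul, abs_of_nonneg (sq_nonneg b₀),
                abs_of_nonneg (by positivity : (0:ℝ) ≤ a₀*b₀)]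
          _ ≤ b₀^2 * 1 + (a₀*b₀) * 1 :=
              add_le_add (mul_le_mul_of_nonneg_left hs1 (sq_nonneg _))
                (mul_le_mul_of_nonneg_left hc1 (by positivity))
          _ = b₀^2 + a₀*b₀ := by ring
      have e2 : |a₀ * s - b₀ * c| ≤ a₀ + b₀ := by
        calc |a₀ * s - b₀ * c| ≤ |a₀ * s| + |b₀ * c| := abs_sub _ _
          _ = a₀ * |s| + b₀ * |c| := by
              rw [abs_mul, abs_mul, abs_of_nonneg ha.le, abs_of_nonneg hb.le]
          _ ≤ a₀ * 1 + b₀ * 1 :=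
              add_le_add (mul_le_mul_of_nonneg_left hs1 ha.le)
                (mul_le_mul_of_nonneg_left hc1 hb.le)
          _ = a₀ + b₀ := by ring
      calc |(-(b₀^2 * s + a₀*b₀ * c) + (a₀+1) * (a₀ * s - b₀ * c))|
          ≤ |(-(b₀^2 * s + a₀*b₀ * c))| + |(a₀+1) * (a₀ * s - b₀ * c)| := abs_add_le _ _
        _ = |b₀^2 * s + a₀*b₀ * c| + (a₀+1) * |a₀ * s - b₀ * c| := by
            rw [abs_neg, abs_mul, abs_of_nonneg (by linarith : (0:ℝ) ≤ a₀+1)]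
        _ ≤ (b₀^2 + a₀*b₀) + (a₀+1) * (a₀+b₀) :=
            add_le_add e1 (mul_le_mul_of_nonneg_left e2 (by linarith))
        _ = M := by rw [hM]
    have hxp : |x ^ (-a₀ - 2)| = x ^ (-a₀ - 2) :=
      abs_of_pos (Real.rpow_pos_of_pos hxpos _)
    rw [hxp]
    have hmono : x ^ (-a₀ - 2) ≤ N ^ (-a₀ - 2) := by
      apply Real.rpow_le_rpow_of_nonpos hN0 hx.1
      linarith
    have hM0 : 0 ≤ M := by nlinarith
    calc |(-(b₀^2 * Real.sin (b₀ * Real.log x) + a₀ * b₀ * Real.cos (b₀ * Real.log x))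
        + (a₀+1) * (a₀ * Real.sin (b₀ * Real.log x) - b₀ * Real.cos (b₀ * Real.log x)))| * x ^ (-a₀ - 2)
        ≤ M * x ^ (-a₀ - 2) := by
          apply mul_le_mul_of_nonneg_right hco (Real.rpow_pos_of_pos hxpos _).le
      _ ≤ M * N ^ (-a₀ - 2) := mul_le_mul_of_nonneg_left hmono hM0
  -- MVT step 1: |g x - g N| ≤ K * (x - N)
  have hgderiv : ∀ x ∈ Set.Icc N (N+1), HasDerivWithinAt g (g' x) (Set.Icc N (N+1)) x :=
    fun x hx => (deriv2 b₀ a₀ x (hpos x hx)).hasDerivWithinAt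
  have hNmem : N ∈ Set.Icc N (N+1) := ⟨le_refl _, by linarith⟩
  have mvt1 : ∀ x ∈ Set.Icc N (N+1), ‖g x - g N‖ ≤ K * ‖x - N‖ := fun x hx =>
    hs.norm_image_sub_le_of_norm_hasDerivWithin_le hgderiv hbound hNmem hx
  -- MVT step 2 on φ x = f x - g N * x
  have hK0 : 0 ≤ K := le_trans (norm_nonneg _) (hbound N hNmem)
  have hphibound : ∀ x ∈ Set.Icc N (N+1), ‖g x - g N‖ ≤ K := by
    intro x hx
    refine le_trans (mvt1 x hx) ?_
    have : ‖x - N‖ ≤ 1 := by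
      rw [Real.norm_eq_abs, abs_of_nonneg (by linarith [hx.1])]
      linarith [hx.2]
    nlinarith
  have hphideriv : ∀ x ∈ Set.Icc N (N+1),
      HasDerivWithinAt (fun x => f x - g N * x) (g x - g N) (Set.Icc N (N+1)) x := by
    intro x hx
    have h1 : HasDerivAt f (g x) x := deriv1 b₀ a₀ x (hpos x hx)
    have h2 : HasDerivAt (fun x => g N * x) (g N) x := by
      simpa using (hasDerivAt_id x).const_mul (g N)
    exact (h1.sub h2).hasDerivWithinAt
  have hN1mem : N + 1 ∈ Set.Icc N (N+1) := ⟨by linarith, le_refl _⟩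
  have mvt2 : ‖(f (N+1) - g N * (N+1)) - (f N - g N * N)‖ ≤ K * ‖(N+1) - N‖ :=
    hs.norm_image_sub_le_of_norm_hasDerivWithin_le hphideriv hphibound hNmem hN1mem
  have hkey : |f (N+1) - (f N + g N)| ≤ K := by
    have e : (f (N+1) - g N * (N+1)) - (f N - g N * N) = f (N+1) - (f N + g N) := by ring
    have e2 : ‖(N+1) - N‖ = 1 := by simp
    rw [e, e2, mul_one] at mvt2
    exact mvt2
  -- rewrite statement in terms of f, g
  have hN10 : (0:ℝ) < N + 1 := by linarith
  have ef1 : Real.sin (b₀ * Real.log (N + 1)) / (N + 1) ^ a₀ = f (N+1) := by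
    rw [hf, div_eq_mul_inv, ← Real.rpow_neg hN10.le]
  have ef2 : Real.sin (b₀ * Real.log N) / N ^ a₀ = f N := by
    rw [hf, div_eq_mul_inv, ← Real.rpow_neg hN0.le]
  have eg : (b₀ * Real.cos (b₀ * Real.log N) - a₀ * Real.sin (b₀ * Real.log N)) / N ^ (a₀+1)
      = g N := by
    rw [hg, div_eq_mul_inv, ← Real.rpow_neg hN0.le]
    ring_nf
  have eK : M / N ^ (a₀ + 2) = K := by
    rw [hK, div_eq_mul_inv, ← Real.rpow_neg hN0.le]
    ring_nf
  rw [ef1, ef2, eg, eK]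
  exact hkey
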